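/- Let H be a Hopf algebra over a commutative ring and let F ∈ H⊗H be invertible and satisfy the twist (2-cocycle) equation F₁₂·(Δ⊗id)(F) = F₂₃·(id⊗Δ)(F) together with (ε⊗id)F = (id⊗ε)F = 1. Then the twisted coproduct Δ_F(x) = F·Δ(x)·F⁻¹ is coassociative: (Δ_F⊗id)∘Δ_F = (id⊗Δ_F)∘Δ_F. -/

import Mathlib

open TensorProduct

private lemma twist_aux {M : Type*} [Monoid M] {a b a' b' e d d' e' : M} (c : M)
    (h1 : a * b = e * d) (h2 : b' * a' = d' * e') :
    a * (b * c * b' * a') = e * (d * c * d' * e') := by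
  simp only [← mul_assoc]
  rw [h1, mul_assoc (e * d * c) b' a', h2, ← mul_assoc]

/-- if `F ∈ H⊗H` is invertible and satisfies the twist (2-cocycle)
equation `F₁₂·(Δ⊗id)(F) = F₂₃·(id⊗Δ)(F)` and the counit conditions
`(ε⊗id)F = (id⊗ε)F = 1`, then the twisted coproduct `Δ_F(x) = F·Δ(x)·F⁻¹`
is coassociative. -/
theorem twisted_coproduct_coassoc {R : Type*} [CommRing R]
    {H : Type*} [Ring H] [HopfAlgebra R H]
    (F Finv : H ⊗[R] H)
    (hinv : F * Finv = 1 ∧ Finv * F = 1)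
    (hcocycle :
      (Algebra.TensorProduct.assoc R R R H H H) (F ⊗ₜ (1:H)) *
          (Algebra.TensorProduct.assoc R R R H H H)
            ((TensorProduct.map Coalgebra.comul LinearMap.id) F) =
        ((1:H) ⊗ₜ F) * (TensorProduct.map LinearMap.id Coalgebra.comul) F)
    (hcounitl : (TensorProduct.lid R H)
      ((TensorProduct.map Coalgebra.counit LinearMap.id) F) = 1)
    (hcounitr : (TensorProduct.rid R H)
      ((TensorProduct.map LinearMap.id Coalgebra.counit) F) = 1) :
    let ΔF : H →ₗ[R] H ⊗[R] H :=
      (LinearMap.mulLeft R F) ∘ₗ (LinearMap.mulRight R Finv) ∘ₗ Coalgebra.comul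
    ∀ x : H,
      (Algebra.TensorProduct.assoc R R R H H H)
          ((TensorProduct.map ΔF LinearMap.id) (ΔF x)) =
        (TensorProduct.map LinearMap.id ΔF) (ΔF x) := by
  intro ΔF x
  obtain ⟨hFr, hFl⟩ := hinv
  set φ := Algebra.TensorProduct.assoc R R R H H H with hφ
  set M₁ : H ⊗[R] H →ₗ[R] (H ⊗[R] H) ⊗[R] H :=
    TensorProduct.map Coalgebra.comul LinearMap.id with hM₁
  set M₂ : H ⊗[R] H →ₗ[R] H ⊗[R] (H ⊗[R] H) :=
    TensorProduct.map LinearMap.id Coalgebra.comul with hM₂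
  have hΔF : ∀ y : H, ΔF y = F * Coalgebra.comul y * Finv := by
    intro y
    simp [ΔF, LinearMap.mulLeft_apply, LinearMap.mulRight_apply, mul_assoc]
  have e1 : TensorProduct.map ΔF LinearMap.id =
      (LinearMap.mulLeft R (F ⊗ₜ (1:H))) ∘ₗ
        (LinearMap.mulRight R (Finv ⊗ₜ (1:H))) ∘ₗ M₁ := by
    ext u v
    simp [ΔF, hM₁, Algebra.TensorProduct.tmul_mul_tmul, mul_assoc]
  have e2 : TensorProduct.map LinearMap.id ΔF =
      (LinearMap.mulLeft R ((1:H) ⊗ₜ F)) ∘ₗ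
        (LinearMap.mulRight R ((1:H) ⊗ₜ Finv)) ∘ₗ M₂ := by
    ext u v
    simp [ΔF, hM₂, Algebra.TensorProduct.tmul_mul_tmul, mul_assoc]
  have e1' : ∀ u, (TensorProduct.map ΔF LinearMap.id) u =
      (F ⊗ₜ (1:H)) * (M₁ u * (Finv ⊗ₜ (1:H))) := fun u => by rw [e1]; rfl
  have e2' : ∀ u, (TensorProduct.map LinearMap.id ΔF) u =
      ((1:H) ⊗ₜ F) * (M₂ u * ((1:H) ⊗ₜ Finv)) := fun u => by rw [e2]; rfl
  have hM₁alg : M₁ = (Algebra.TensorProduct.map (Bialgebra.comulAlgHom R H)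
      (AlgHom.id R H)).toLinearMap := by
    ext u v; simp [hM₁]
  have hM₂alg : M₂ = (Algebra.TensorProduct.map (AlgHom.id R H)
      (Bialgebra.comulAlgHom R H)).toLinearMap := by
    ext u v; simp [hM₂]
  have hM₁mul : ∀ a b : H ⊗[R] H, M₁ (a * b) = M₁ a * M₁ b := by
    intro a b; rw [hM₁alg]; simp only [AlgHom.toLinearMap_apply]; exact map_mul _ a b
  have hM₂mul : ∀ a b : H ⊗[R] H, M₂ (a * b) = M₂ a * M₂ b := by
    intro a b; rw [hM₂alg]; simp only [AlgHom.toLinearMap_apply]; exact map_mul _ a b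
  have hcoassoc : ∀ y : H, φ (M₁ (Coalgebra.comul y)) = M₂ (Coalgebra.comul y) := by
    intro y
    have := Coalgebra.coassoc_apply (R := R) (A := H) y
    simp [LinearMap.rTensor, LinearMap.lTensor, hM₁, hM₂, hφ] at this ⊢
    exact this
  -- inverse pairs
  have hAA' : φ (F ⊗ₜ (1:H)) * φ (Finv ⊗ₜ (1:H)) = 1 := by
    rw [← map_mul]
    simp [Algebra.TensorProduct.tmul_mul_tmul, hFr, Algebra.TensorProduct.one_def,
      hφ, Algebra.TensorProduct.assoc_tmul]
  have hA'A : φ (Finv ⊗ₜ (1:H)) * φ (F ⊗ₜ (1:H)) = 1 := by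
    rw [← map_mul]
    simp [Algebra.TensorProduct.tmul_mul_tmul, hFl, Algebra.TensorProduct.one_def,
      hφ, Algebra.TensorProduct.assoc_tmul]
  have hBB' : φ (M₁ F) * φ (M₁ Finv) = 1 := by
    rw [← map_mul, ← hM₁mul, hFr]
    simp only [hM₁alg, AlgHom.toLinearMap_apply, map_one]
  have hB'B : φ (M₁ Finv) * φ (M₁ F) = 1 := by
    rw [← map_mul, ← hM₁mul, hFl]
    simp only [hM₁alg, AlgHom.toLinearMap_apply, map_one]
  have hDD' : M₂ F * M₂ Finv = 1 := by
    rw [← hM₂mul, hFr]; simp only [hM₂alg, AlgHom.toLinearMap_apply, map_one]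
  have hD'D : M₂ Finv * M₂ F = 1 := by
    rw [← hM₂mul, hFl]; simp only [hM₂alg, AlgHom.toLinearMap_apply, map_one]
  have hEE' : ((1:H) ⊗ₜ F : H ⊗[R] (H ⊗[R] H)) * ((1:H) ⊗ₜ Finv) = 1 := by
    simp [Algebra.TensorProduct.tmul_mul_tmul, hFr, Algebra.TensorProduct.one_def]
  have hE'E : ((1:H) ⊗ₜ Finv : H ⊗[R] (H ⊗[R] H)) * ((1:H) ⊗ₜ F) = 1 := by
    simp [Algebra.TensorProduct.tmul_mul_tmul, hFl, Algebra.TensorProduct.one_def]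
  -- units and the inverse cocycle relation
  let uA : (H ⊗[R] (H ⊗[R] H))ˣ := ⟨φ (F ⊗ₜ (1:H)), φ (Finv ⊗ₜ (1:H)), hAA', hA'A⟩
  let uB : (H ⊗[R] (H ⊗[R] H))ˣ := ⟨φ (M₁ F), φ (M₁ Finv), hBB', hB'B⟩
  let uD : (H ⊗[R] (H ⊗[R] H))ˣ := ⟨M₂ F, M₂ Finv, hDD', hD'D⟩
  let uE : (H ⊗[R] (H ⊗[R] H))ˣ := ⟨((1:H) ⊗ₜ F), ((1:H) ⊗ₜ Finv), hEE', hE'E⟩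
  have hu : uA * uB = uE * uD := Units.ext hcocycle
  have hu' : uB⁻¹ * uA⁻¹ = uD⁻¹ * uE⁻¹ := by
    rw [← mul_inv_rev, ← mul_inv_rev, hu]
  have hinv' : φ (M₁ Finv) * φ (Finv ⊗ₜ (1:H)) = M₂ Finv * ((1:H) ⊗ₜ Finv) :=
    congrArg Units.val hu'
  -- main computation
  rw [hΔF x, e1' _, e2' _, hM₁mul, hM₁mul, hM₂mul, hM₂mul,
    map_mul, map_mul, map_mul, map_mul, hcoassoc x]
  exact twist_aux (M₂ (Coalgebra.comul x)) hcocycle hinv'
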